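/- For every real number L and every c > 0, the set of pairs (v₁, v₂) ∈ ℤ[i] × ℤ[i] of Gaussian integers for which there exists τ ∈ ℂ with Im τ ≥ c, 0 ≤ Re τ ≤ 1, v₁·conj(τ) = v₂, and ‖v‖²_τ := |v₁|²·Im τ + |v₂ − v₁·Re τ|²/Im τ ≤ L, is finite. (Finiteness of self-dual flux vacua with bounded tadpole on the rigid Y₃ × T² compactification; paper §3.1.) -/

import Mathlib

open GaussianInt Complex

lemma gaussian_abs_le_finite (R : ℝ) :
    {x : GaussianInt | ‖(x : ℂ)‖ ≤ R}.Finite := by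
  have hsub : {x : GaussianInt | ‖(x : ℂ)‖ ≤ R} ⊆
      (fun x : GaussianInt => (x.re, x.im)) ⁻¹'
        (Set.Icc (-⌈R⌉) ⌈R⌉ ×ˢ Set.Icc (-⌈R⌉) ⌈R⌉) := by
    intro x hx
    simp only [Set.mem_setOf_eq] at hx
    have hre : |((x.re : ℤ) : ℝ)| ≤ R := by
      rw [GaussianInt.intCast_re]
      exact (Complex.abs_re_le_norm _).trans hx
    have him : |((x.im : ℤ) : ℝ)| ≤ R := by
      rw [GaussianInt.intCast_im]
      exact (Complex.abs_im_le_norm _).trans hx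
    have hRceil : R ≤ (⌈R⌉ : ℝ) := Int.le_ceil R
    constructor
    · constructor
      · have := (abs_le.mp (hre.trans hRceil)).1
        exact_mod_cast this
      · have := (abs_le.mp (hre.trans hRceil)).2
        exact_mod_cast this
    · constructor
      · have := (abs_le.mp (him.trans hRceil)).1
        exact_mod_cast this
      · have := (abs_le.mp (him.trans hRceil)).2
        exact_mod_cast this
  have hfin : ((Set.Icc (-⌈R⌉) ⌈R⌉ : Set ℤ) ×ˢ (Set.Icc (-⌈R⌉) ⌈R⌉ : Set ℤ)).Finite :=
    (Set.finite_Icc _ _).prod (Set.finite_Icc _ _)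
  have hinj : Function.Injective (fun x : GaussianInt => (x.re, x.im)) := by
    intro a b hab
    simp only [Prod.mk.injEq] at hab
    exact Zsqrtd.ext_iff.mpr hab
  exact Set.Finite.subset (hfin.preimage (hinj.injOn)) hsub

/-- Finiteness of self-dual flux vacua with bounded tadpole on the rigid `Y₃ × T²`
compactification: for any tadpole bound `L` and any cutoff `c > 0`, only finitely many
pairs of Gaussian-integer fluxes `(v₁, v₂)` admit a Teichmüller parameter `τ` with
`Im τ ≥ c`, `0 ≤ Re τ ≤ 1`, satisfying the self-duality relation `v₁ * conj τ = v₂`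
and the tadpole bound `|v₁|² Im τ + |v₂ - v₁ Re τ|² / Im τ ≤ L`. -/
theorem finiteness_selfdual_flux_torus
    (L c : ℝ) (hc : 0 < c) :
    {p : GaussianInt × GaussianInt | ∃ τ : ℂ,
      c ≤ τ.im ∧ 0 ≤ τ.re ∧ τ.re ≤ 1 ∧
      (p.1 : ℂ) * (starRingEnd ℂ) τ = (p.2 : ℂ) ∧
      ‖(p.1 : ℂ)‖ ^ 2 * τ.im
        + ‖(p.2 : ℂ) - (p.1 : ℂ) * (τ.re : ℂ)‖ ^ 2 / τ.im ≤ L}.Finite := by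
  set R : ℝ := Real.sqrt ((L / (2 * c)) * (1 + (L / 2) ^ 2)) with hR
  apply Set.Finite.subset
    (((gaussian_abs_le_finite R).prod (gaussian_abs_le_finite R)))
  rintro ⟨v₁, v₂⟩ ⟨τ, hct, hre0, hre1, hsd, htad⟩
  have ht0 : 0 < τ.im := lt_of_lt_of_le hc hct
  set a : ℝ := ‖(v₁ : ℂ)‖ with ha
  have ha0 : 0 ≤ a := norm_nonneg _
  -- compute the second term of the tadpole
  have hconj : (starRingEnd ℂ) τ = (τ.re : ℂ) - τ.im * Complex.I := by
    apply Complex.ext <;> simp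
  have hsub : (v₂ : ℂ) - (v₁ : ℂ) * (τ.re : ℂ)
      = (v₁ : ℂ) * (-((τ.im : ℂ) * Complex.I)) := by
    rw [← hsd, hconj]; ring
  have habs : ‖(v₂ : ℂ) - (v₁ : ℂ) * (τ.re : ℂ)‖ = a * τ.im := by
    rw [hsub, norm_mul]
    rw [show ‖-((τ.im : ℂ) * Complex.I)‖ = τ.im by
      simp [abs_of_pos ht0]]
  have hdiv : (a * τ.im) ^ 2 / τ.im = a ^ 2 * τ.im := by
    field_simp
  rw [habs, hdiv] at htad
  have htad2 : 2 * (a ^ 2 * τ.im) ≤ L := by linarith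
  have hL0 : 0 ≤ L := le_trans (by positivity) htad2
  have ha2 : a ^ 2 ≤ L / (2 * c) := by
    rw [le_div_iff₀ (by positivity : (0:ℝ) < 2 * c)]
    nlinarith [sq_nonneg a, hct]
  have hRsq : R ^ 2 = (L / (2 * c)) * (1 + (L / 2) ^ 2) := by
    rw [hR, Real.sq_sqrt]
    positivity
  have hfac : (1 : ℝ) ≤ 1 + (L / 2) ^ 2 := by nlinarith [sq_nonneg (L / 2)]
  have hdiv0 : 0 ≤ L / (2 * c) := by positivity
  constructor
  · -- bound on v₁
    show ‖(v₁ : ℂ)‖ ≤ R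
    rw [hR]
    rw [show ‖(v₁ : ℂ)‖ = Real.sqrt (a ^ 2) by
      rw [Real.sqrt_sq ha0]]
    apply Real.sqrt_le_sqrt
    nlinarith
  · -- bound on v₂
    show ‖(v₂ : ℂ)‖ ≤ R
    by_cases hv1 : v₁ = 0
    · have : (v₂ : ℂ) = 0 := by rw [← hsd, hv1]; simp
      rw [this, norm_zero]
      exact Real.sqrt_nonneg _
    · have h1a : 1 ≤ a ^ 2 := by
        have hnorm : (Zsqrtd.norm v₁ : ℝ) = Complex.normSq (v₁ : ℂ) :=
          GaussianInt.intCast_real_norm v₁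
        have hnn : 0 ≤ Zsqrtd.norm v₁ := Zsqrtd.norm_nonneg (by norm_num) v₁
        have hne : Zsqrtd.norm v₁ ≠ 0 := by
          intro h
          exact hv1 ((Zsqrtd.norm_eq_zero_iff (by norm_num) v₁).mp h)
        have h1 : (1 : ℤ) ≤ Zsqrtd.norm v₁ := lt_of_le_of_ne hnn (Ne.symm hne)
        have : (1 : ℝ) ≤ Complex.normSq (v₁ : ℂ) := by
          rw [← hnorm]; exact_mod_cast h1
        rwa [← Complex.sq_norm] at this
      have htle : τ.im ≤ L / 2 := by nlinarith
      have habs2 : ‖(v₂ : ℂ)‖ ^ 2 = a ^ 2 * (τ.re ^ 2 + τ.im ^ 2) := by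
        rw [← hsd, norm_mul, mul_pow, ha]
        congr 1
        rw [Complex.sq_norm, Complex.normSq_apply]
        simp [Complex.conj_re, Complex.conj_im]
        ring
      have hb : ‖(v₂ : ℂ)‖ ^ 2 ≤ R ^ 2 := by
        have hre2 : τ.re ^ 2 ≤ 1 := by
          have := pow_le_pow_left₀ hre0 hre1 2
          simpa using this
        have ht2 : τ.im ^ 2 ≤ (L / 2) ^ 2 := pow_le_pow_left₀ ht0.le htle 2
        have h1 : a ^ 2 * τ.re ^ 2 ≤ L / (2 * c) :=
          le_trans (mul_le_of_le_one_right (sq_nonneg a) hre2) ha2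
        have h2 : a ^ 2 * τ.im ^ 2 ≤ L / (2 * c) * (L / 2) ^ 2 :=
          mul_le_mul ha2 ht2 (sq_nonneg _) hdiv0
        have h3 : a ^ 2 * (τ.re ^ 2 + τ.im ^ 2)
            = a ^ 2 * τ.re ^ 2 + a ^ 2 * τ.im ^ 2 := by ring
        have h4 : L / (2 * c) * (1 + (L / 2) ^ 2)
            = L / (2 * c) + L / (2 * c) * (L / 2) ^ 2 := by ring
        rw [habs2, hRsq, h3, h4]
        exact add_le_add h1 h2
      calc ‖(v₂ : ℂ)‖ = Real.sqrt (‖(v₂ : ℂ)‖ ^ 2) := by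
            rw [Real.sqrt_sq (norm_nonneg _)]
        _ ≤ Real.sqrt (R ^ 2) := Real.sqrt_le_sqrt hb
        _ = R := by rw [Real.sqrt_sq (Real.sqrt_nonneg _)]
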